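/- Let a, b be any floating-point numbers and fl round-to-nearest in radix 2. Define s = fl(a+b), v = fl(s - a), e = fl(fl(a - fl(s - v)) + fl(b - v)). Then s + e = a + b exactly (Knuth's TwoSum is an error-free transformation without any assumption on |a|, |b|). -/
import Mathlib


/-- Radix-2 precision-`p` floating-point numbers (unbounded exponent model). -/
def Fp (p : ℕ) : Set ℝ := {x | ∃ m e : ℤ, |m| < 2 ^ p ∧ x = (m : ℝ) * (2 : ℝ) ^ e}

namespace TwoSumAux

/-- `u` is a nearest element of `Fp p` to `x`. -/
def Near (p : ℕ) (x u : ℝ) : Prop := u ∈ Fp p ∧ ∀ y ∈ Fp p, |u - x| ≤ |y - x|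

/-- `x` is an integer multiple of `2^q`. -/
def Mul2 (q : ℤ) (x : ℝ) : Prop := ∃ k : ℤ, x = (k : ℝ) * (2:ℝ) ^ q

lemma zp (q : ℤ) : (0:ℝ) < 2 ^ q := zpow_pos (by norm_num) q

lemma zpadd (q r : ℤ) : (2:ℝ) ^ (q + r) = 2 ^ q * 2 ^ r := zpow_add₀ two_ne_zero q r

lemma zpnat (n : ℕ) : (2:ℝ) ^ (n : ℤ) = 2 ^ n := zpow_natCast 2 n

lemma Mul2.sub {q : ℤ} {x y : ℝ} (hx : Mul2 q x) (hy : Mul2 q y) : Mul2 q (x - y) := by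
  obtain ⟨k, rfl⟩ := hx; obtain ⟨j, rfl⟩ := hy
  exact ⟨k - j, by push_cast; ring⟩

lemma Mul2.add {q : ℤ} {x y : ℝ} (hx : Mul2 q x) (hy : Mul2 q y) : Mul2 q (x + y) := by
  obtain ⟨k, rfl⟩ := hx; obtain ⟨j, rfl⟩ := hy
  exact ⟨k + j, by push_cast; ring⟩

lemma Mul2.mono {q q' : ℤ} {x : ℝ} (h : Mul2 q x) (hq : q' ≤ q) : Mul2 q' x := by
  obtain ⟨k, rfl⟩ := h
  refine ⟨k * 2 ^ (q - q').toNat, ?_⟩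
  have h1 : ((q - q').toNat : ℤ) = q - q' := Int.toNat_of_nonneg (by omega)
  push_cast
  rw [← zpnat, h1, mul_assoc, ← zpadd]
  ring_nf

lemma zero_mem (p : ℕ) : (0:ℝ) ∈ Fp p :=
  ⟨0, 0, by simp, by simp⟩

lemma neg_mem {p : ℕ} {x : ℝ} (h : x ∈ Fp p) : -x ∈ Fp p := by
  obtain ⟨m, e, hm, rfl⟩ := h
  exact ⟨-m, e, by simpa using hm, by push_cast; ring⟩

lemma two_zpow_mem (p : ℕ) (hp : 0 < p) (e : ℤ) : (2:ℝ) ^ e ∈ Fp p := by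
  refine ⟨1, e, ?_, by push_cast; ring⟩
  have : (2:ℤ)^1 ≤ 2^p := pow_le_pow_right₀ (by norm_num) hp
  simpa using lt_of_lt_of_le (by norm_num) this

lemma grid_mem {p : ℕ} (hp : 0 < p) (k q : ℤ) (h : |k| ≤ 2 ^ p) :
    ((k:ℝ) * 2 ^ q) ∈ Fp p := by
  rcases h.lt_or_eq with h' | h'
  · exact ⟨k, q, h', rfl⟩
  · have hk := (abs_eq (a := k) (b := 2 ^ p) (by positivity)).mp h'
    have hm : |(2:ℤ) ^ (p-1)| < 2 ^ p := by
      rw [abs_pow, abs_two]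
      exact pow_lt_pow_right₀ (by norm_num) (by omega)
    have heq : ((2:ℝ) ^ p) * 2 ^ q = ((2:ℝ) ^ (p-1)) * 2 ^ (q+1) := by
      rw [← zpnat, ← zpnat, ← zpadd, ← zpadd]
      congr 1
      omega
    rcases hk with rfl | rfl
    · refine ⟨2 ^ (p-1), q + 1, hm, ?_⟩
      push_cast
      rw [heq]
    · refine ⟨-(2 ^ (p-1)), q + 1, by simpa using hm, ?_⟩
      push_cast
      rw [show -((2:ℝ)^p) * 2^q = -(2^p * 2^q) by ring, heq]
      ring

/-- multiple of `2^q` bounded by `2^(p+q)` is representable. -/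
lemma grid_mem' {p : ℕ} (hp : 0 < p) {q : ℤ} {x : ℝ} (h1 : Mul2 q x)
    (h2 : |x| ≤ 2 ^ ((p:ℤ) + q)) : x ∈ Fp p := by
  obtain ⟨k, rfl⟩ := h1
  refine grid_mem hp k q ?_
  have hq := zp q
  rw [abs_mul, abs_of_pos hq, zpadd, zpnat] at h2
  have : |(k:ℝ)| ≤ 2 ^ p := le_of_mul_le_mul_right (by linarith [h2]) hq
  exact_mod_cast this

/-- normalized representation -/
lemma normalized {p : ℕ} (hp : 0 < p) {x : ℝ} (hx : x ∈ Fp p) (h0 : x ≠ 0) :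
    ∃ m e : ℤ, 2 ^ (p-1) ≤ |m| ∧ |m| < 2 ^ p ∧ x = (m:ℝ) * 2 ^ e := by
  obtain ⟨m, e, hm, rfl⟩ := hx
  have hm0 : m ≠ 0 := by rintro rfl; simp at h0
  have hone : (1:ℤ) ≤ |m| := Int.one_le_abs hm0
  have hex : ∃ n : ℕ, 2 ^ (p-1) ≤ |m| * 2 ^ n := by
    refine ⟨p - 1, ?_⟩
    calc (2:ℤ) ^ (p-1) = 1 * 2 ^ (p-1) := by ring
    _ ≤ |m| * 2 ^ (p-1) := mul_le_mul_of_nonneg_right hone (by positivity)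
  classical
  have hspec : 2 ^ (p-1) ≤ |m| * 2 ^ (Nat.find hex) := Nat.find_spec hex
  set n := Nat.find hex with hn
  refine ⟨m * 2 ^ n, e - n, ?_, ?_, ?_⟩
  · rw [abs_mul, abs_pow]; simpa using hspec
  · rw [abs_mul, abs_pow]; simp only [abs_two]
    rcases Nat.eq_zero_or_pos n with h | h
    · simpa [h] using hm
    · have hlt : ¬ (2 ^ (p-1) ≤ |m| * 2 ^ (n - 1)) := Nat.find_min hex (by omega)
      push_neg at hlt
      have hA : (0:ℤ) < 2 ^ (p-1) := by positivity
      have hstep : |m| * 2 ^ n = (|m| * 2 ^ (n-1)) * 2 := by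
        rw [mul_assoc, ← pow_succ, Nat.sub_add_cancel h]
      have hp2 : (2:ℤ) ^ (p-1) * 2 = 2 ^ p := by
        rw [← pow_succ, Nat.sub_add_cancel hp]
      rw [hstep, ← hp2]
      exact mul_lt_mul_of_pos_right hlt (by norm_num)
  · push_cast
    rw [← zpnat, mul_assoc, ← zpadd]
    congr 2
    push_cast
    ring

/-- an element of `Fp` of large magnitude is a multiple of `2^E`. -/
lemma mem_mul2 {p : ℕ} (hp : 0 < p) {x : ℝ} (hx : x ∈ Fp p) {E : ℤ}
    (h : 2 ^ ((p:ℤ) + E - 1) ≤ |x|) : Mul2 E x := by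
  have h0 : x ≠ 0 := by
    intro h0; rw [h0, abs_zero] at h; exact absurd h (not_le.mpr (zp _))
  obtain ⟨m, e, hm1, hm2, rfl⟩ := normalized hp hx h0
  have hb : |(m:ℝ) * 2 ^ e| < 2 ^ ((p:ℤ) + e) := by
    rw [abs_mul, abs_of_pos (zp e), zpadd, zpnat]
    have : |(m:ℝ)| < 2 ^ p := by exact_mod_cast hm2
    exact mul_lt_mul_of_pos_right this (zp e)
  have hlt : (2:ℝ) ^ ((p:ℤ) + E - 1) < 2 ^ ((p:ℤ) + e) := lt_of_le_of_lt h hb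
  have hEe : E ≤ e := by
    have := (zpow_lt_zpow_iff_right₀ (by norm_num : (1:ℝ) < 2)).mp hlt
    omega
  exact Mul2.mono (q := e) ⟨m, rfl⟩ hEe

lemma abs_lt_of_mem {p : ℕ} {x : ℝ} {m e : ℤ} (hm : |m| < 2 ^ p)
    (hx : x = (m:ℝ) * 2 ^ e) : |x| < 2 ^ ((p:ℤ) + e) := by
  subst hx
  rw [abs_mul, abs_of_pos (zp e), zpadd, zpnat]
  have : |(m:ℝ)| < 2 ^ p := by exact_mod_cast hm
  exact mul_lt_mul_of_pos_right this (zp e)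

lemma Near.mem {p : ℕ} {x u : ℝ} (h : Near p x u) : u ∈ Fp p := h.1

lemma Near.le {p : ℕ} {x u : ℝ} (h : Near p x u) {y : ℝ} (hy : y ∈ Fp p) :
    |u - x| ≤ |y - x| := h.2 y hy

lemma Near.self {p : ℕ} {x u : ℝ} (hx : x ∈ Fp p) (h : Near p x u) : u = x := by
  have := h.le hx
  simp only [sub_self, abs_zero] at this
  have := abs_nonpos_iff.mp this
  linarith [sub_eq_zero.mp this]

lemma Near.neg {p : ℕ} {x u : ℝ} (h : Near p x u) : Near p (-x) (-u) := by
  refine ⟨neg_mem h.1, fun y hy => ?_⟩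
  have := h.le (neg_mem hy)
  calc |-u - -x| = |u - x| := by rw [← abs_neg]; ring_nf
  _ ≤ |-y - x| := this
  _ = |y - -x| := by rw [← abs_neg]; ring_nf

lemma near_abs {p : ℕ} {r u c : ℝ} (h : Near p r u) (hc : c ∈ Fp p)
    (h0 : 0 ≤ c) (hcr : c ≤ |r|) : c ≤ |u| := by
  have key : ∀ r' u' : ℝ, Near p r' u' → 0 ≤ r' → c ≤ r' → c ≤ u' := by
    intro r' u' h' hr' hcr'
    by_contra hcu
    push_neg at hcu
    have h1 : |u' - r'| = r' - u' := by rw [abs_sub_comm]; exact abs_of_nonneg (by linarith)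
    have h2 : |c - r'| = r' - c := by rw [abs_sub_comm]; exact abs_of_nonneg (by linarith)
    have := h'.le hc
    rw [h1, h2] at this
    linarith
  rcases le_or_gt 0 r with hr | hr
  · rw [abs_of_nonneg hr] at hcr
    have := key r u h hr hcr
    exact le_trans this (le_abs_self u)
  · rw [abs_of_neg hr] at hcr
    have := key (-r) (-u) h.neg (by linarith) hcr
    calc c ≤ -u := this
    _ ≤ |u| := neg_le_abs u

/-- rounding a multiple of `2^q` yields a multiple of `2^q`. -/
lemma near_mul2 {p : ℕ} (hp : 0 < p) {q : ℤ} {r u : ℝ} (hr : Mul2 q r)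
    (h : Near p r u) : Mul2 q u := by
  obtain ⟨k, rfl⟩ := hr
  rcases le_or_gt |k| (2 ^ p) with hk | hk
  · have : ((k:ℝ) * 2 ^ q) ∈ Fp p := grid_mem hp k q hk
    rw [h.self this]
    exact ⟨k, rfl⟩
  · have hub : (2:ℝ) ^ ((p:ℤ) + (q+1) - 1) ≤ |(k:ℝ) * 2 ^ q| := by
      rw [abs_mul, abs_of_pos (zp q)]
      have h1 : ((2:ℝ) ^ p) ≤ |(k:ℝ)| := by
        have : ((2:ℤ) ^ p) ≤ |k| := hk.le
        exact_mod_cast this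
      have : (2:ℝ) ^ ((p:ℤ) + (q+1) - 1) = 2 ^ p * 2 ^ q := by
        rw [show (p:ℤ) + (q+1) - 1 = (p:ℤ) + q by ring, zpadd, zpnat]
      rw [this]
      exact mul_le_mul_of_nonneg_right h1 (zp q).le
    have habs := near_abs h (two_zpow_mem p hp ((p:ℤ) + (q+1) - 1)) (zp _).le hub
    exact (mem_mul2 hp h.mem habs).mono (by omega)

/-- half-ulp bound: if `|r| ≤ 2^(p+E)` then the rounding error is at most `2^E/2`. -/
lemma near_half {p : ℕ} (hp : 0 < p) {r u : ℝ} (h : Near p r u) {E : ℤ}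
    (hr : |r| ≤ 2 ^ ((p:ℤ) + E)) : |u - r| ≤ 2 ^ E / 2 := by
  set j := round (r / 2 ^ E) with hj
  have hdist : |(j:ℝ) * 2 ^ E - r| ≤ 2 ^ E / 2 := by
    have h1 : |(j:ℝ) - r / 2 ^ E| ≤ 1/2 := by rw [abs_sub_comm]; exact abs_sub_round _
    have h2 : (j:ℝ) * 2 ^ E - r = ((j:ℝ) - r / 2 ^ E) * 2 ^ E := by
      field_simp
    rw [h2, abs_mul, abs_of_pos (zp E)]
    calc |(j:ℝ) - r / 2^E| * 2^E ≤ (1/2) * 2^E :=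
      mul_le_mul_of_nonneg_right h1 (zp E).le
    _ = 2^E / 2 := by ring
  have hjb : |j| ≤ 2 ^ p := by
    have h3 : |(j:ℝ)| ≤ |r / 2^E| + 1/2 := by
      have := abs_sub_round (r / 2^E)
      calc |(j:ℝ)| = |((j:ℝ) - r / 2^E) + r / 2^E| := by ring_nf
      _ ≤ |(j:ℝ) - r/2^E| + |r / 2^E| := abs_add_le _ _
      _ ≤ |r / 2^E| + 1/2 := by rw [abs_sub_comm] at *; linarith [abs_sub_round (r / 2^E)]
    have h4 : |r / 2^E| ≤ 2 ^ p := by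
      rw [abs_div, abs_of_pos (zp E), div_le_iff₀ (zp E)]
      rw [zpadd, zpnat] at hr
      exact hr
    have h5 : |(j:ℝ)| < 2 ^ p + 1 := by linarith
    have h6 : |j| < 2 ^ p + 1 := by exact_mod_cast h5
    omega
  have hmem : ((j:ℝ) * 2 ^ E) ∈ Fp p := grid_mem hp j E hjb
  exact le_trans (h.le hmem) hdist

lemma zpsucc (q : ℤ) : (2:ℝ) ^ (q + 1) = 2 ^ q * 2 := by
  rw [zpadd, zpow_one]

lemma norm_pack {p : ℕ} (hp : 0 < p) {x : ℝ} (hx : x ∈ Fp p) (h0 : x ≠ 0) :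
    ∃ e : ℤ, Mul2 e x ∧ |x| ≤ 2 ^ ((p:ℤ) + e) - 2 ^ e ∧ 2 ^ ((p:ℤ) + e - 1) ≤ |x| := by
  obtain ⟨m, e, h1, h2, rfl⟩ := normalized hp hx h0
  have habs : |(m:ℝ) * 2 ^ e| = |(m:ℝ)| * 2 ^ e := by
    rw [abs_mul, abs_of_pos (zp e)]
  refine ⟨e, ⟨m, rfl⟩, ?_, ?_⟩
  · have hm : |(m:ℝ)| ≤ 2 ^ p - 1 := by
      have h3 : ((|m|:ℤ):ℝ) ≤ ((2 ^ p - 1 : ℤ):ℝ) := by exact_mod_cast (by omega : |m| ≤ 2 ^ p - 1)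
      rw [Int.cast_abs] at h3
      push_cast at h3
      linarith
    rw [habs, zpadd, zpnat]
    have := mul_le_mul_of_nonneg_right hm (zp e).le
    linarith [this]
  · have hm : ((2:ℝ) ^ (p - 1 : ℕ)) ≤ |(m:ℝ)| := by
      have h3 : (((2:ℤ) ^ (p-1 : ℕ) : ℤ):ℝ) ≤ ((|m|:ℤ):ℝ) := by exact_mod_cast h1
      rw [Int.cast_abs] at h3
      push_cast at h3
      linarith
    have hE : (2:ℝ) ^ ((p:ℤ) + e - 1) = 2 ^ (p - 1 : ℕ) * 2 ^ e := by
      rw [← zpnat, ← zpadd]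
      congr 1
      omega
    rw [hE, habs]
    exact mul_le_mul_of_nonneg_right hm (zp e).le

lemma err_mem {p : ℕ} (hp : 0 < p) {a b s : ℝ} (ha : a ∈ Fp p) (hb : b ∈ Fp p)
    (hs : Near p (a + b) s) : (a + b) - s ∈ Fp p := by
  rcases eq_or_ne a 0 with rfl | ha0
  · have h0b : (0:ℝ) + b ∈ Fp p := by simpa using hb
    rw [hs.self h0b]
    simpa using zero_mem p
  rcases eq_or_ne b 0 with rfl | hb0
  · have ha0' : a + (0:ℝ) ∈ Fp p := by simpa using ha
    rw [hs.self ha0']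
    simpa using zero_mem p
  obtain ⟨ea, hMa, hUa, hLa⟩ := norm_pack hp ha ha0
  obtain ⟨eb, hMb, hUb, hLb⟩ := norm_pack hp hb hb0
  set q := min ea eb with hq
  have hMa' : Mul2 q a := hMa.mono (min_le_left _ _)
  have hMb' : Mul2 q b := hMb.mono (min_le_right _ _)
  have hMs : Mul2 q s := near_mul2 hp (hMa'.add hMb') hs
  have h1 : |s - (a + b)| ≤ |a| := by
    have := hs.le hb
    rwa [show b - (a + b) = -a by ring, abs_neg] at this
  have h2 : |s - (a + b)| ≤ |b| := by
    have := hs.le ha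
    rwa [show a - (a + b) = -b by ring, abs_neg] at this
  apply grid_mem' hp ((hMa'.add hMb').sub hMs)
  rw [abs_sub_comm]
  rcases le_total ea eb with h | h
  · have hqa : q = ea := min_eq_left h
    rw [hqa]
    have := zp ea
    linarith
  · have hqb : q = eb := min_eq_right h
    rw [hqb]
    have := zp eb
    linarith

lemma fast2sum {p : ℕ} (hp : 0 < p) {a b s : ℝ} (ha : a ∈ Fp p) (hb : b ∈ Fp p)
    (hs : Near p (a + b) s) {ea eb : ℤ} (hMa : Mul2 ea a) (hMb : Mul2 eb b)
    (hUa : |a| ≤ 2 ^ ((p:ℤ) + ea) - 2 ^ ea) (hUb : |b| ≤ 2 ^ ((p:ℤ) + eb) - 2 ^ eb)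
    (hle : eb ≤ ea) : s - a ∈ Fp p := by
  have hMs : Mul2 eb s := near_mul2 hp ((hMa.mono hle).add hMb) hs
  have herr : |s - (a + b)| ≤ |b| := by
    have := hs.le ha
    rwa [show a - (a + b) = -b by ring, abs_neg] at this
  have hta : |s - a| ≤ |s - (a + b)| + |b| := by
    calc |s - a| = |(s - (a + b)) + b| := by congr 1; ring
    _ ≤ |s - (a + b)| + |b| := abs_add_le _ _
  rcases le_or_gt |s - a| (2 ^ ((p:ℤ) + eb)) with hc | hc
  · exact grid_mem' hp (hMs.sub (hMa.mono hle)) hc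
  · have herr2 : 2 ^ eb < |s - (a + b)| := by
      have := zp eb
      linarith
    have hrbig : 2 ^ ((p:ℤ) + (eb + 1)) < |a + b| := by
      by_contra hcon
      push_neg at hcon
      have hh := near_half hp hs hcon
      have h2 : (2:ℝ) ^ (eb + 1) = 2 ^ eb * 2 := zpsucc eb
      linarith
    have hs2 : Mul2 (eb + 2) s := by
      have hcle : (2:ℝ) ^ ((p:ℤ) + (eb + 2) - 1) ≤ |a + b| := by
        rw [show (p:ℤ) + (eb + 2) - 1 = (p:ℤ) + (eb + 1) by ring]
        exact hrbig.le
      exact mem_mul2 hp hs.mem (near_abs hs (two_zpow_mem p hp _) (zp _).le hcle)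
    have hpow : (2:ℝ) ^ ((p:ℤ) + (eb + 1)) = 2 ^ ((p:ℤ) + eb) * 2 := by
      rw [show (p:ℤ) + (eb + 1) = ((p:ℤ) + eb) + 1 by ring, zpsucc]
    have hea : eb + 1 ≤ ea := by
      by_contra hcon
      push_neg at hcon
      have heaeb : ea = eb := le_antisymm (by omega) hle
      rw [heaeb] at hUa
      have habs := abs_add_le a b
      have := zp eb
      linarith
    apply grid_mem' hp ((hs2.mono (by omega)).sub (hMa.mono hea))
    have := zp eb
    linarith

lemma claims {p : ℕ} (hp : 0 < p) {a b s v : ℝ} (ha : a ∈ Fp p) (hb : b ∈ Fp p)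
    (hs : Near p (a + b) s) (hv : Near p (s - a) v) :
    (s - v) ∈ Fp p ∧ (b - v) ∈ Fp p := by
  rcases eq_or_ne a 0 with rfl | ha0
  · have h0b : (0:ℝ) + b ∈ Fp p := by simpa using hb
    have hsb : s = 0 + b := hs.self h0b
    have hsv : s - 0 ∈ Fp p := by
      rw [hsb]
      simpa using hb
    have hvs : v = s - 0 := hv.self hsv
    constructor
    · rw [hvs]
      simpa using zero_mem p
    · rw [hvs, hsb]
      simpa using zero_mem p
  rcases eq_or_ne b 0 with rfl | hb0
  · have ha0' : a + (0:ℝ) ∈ Fp p := by simpa using ha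
    have hsa : s = a + 0 := hs.self ha0'
    have hsv : s - a ∈ Fp p := by
      rw [hsa]
      simpa using zero_mem p
    have hvs : v = s - a := hv.self hsv
    constructor
    · rw [hvs, sub_sub_cancel]
      exact ha
    · rw [hvs, hsa]
      simpa using zero_mem p
  obtain ⟨ea, hMa, hUa, hLa⟩ := norm_pack hp ha ha0
  obtain ⟨eb, hMb, hUb, hLb⟩ := norm_pack hp hb hb0
  rcases le_total eb ea with hle | hle
  · -- easy case: s - a is exactly representable
    have ht : (s - a) ∈ Fp p := fast2sum hp ha hb hs hMa hMb hUa hUb hle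
    have hvt : v = s - a := hv.self ht
    constructor
    · rw [hvt, sub_sub_cancel]
      exact ha
    · rw [hvt, show b - (s - a) = (a + b) - s by ring]
      exact err_mem hp ha hb hs
  · -- hard case
    have hMb' : Mul2 ea b := hMb.mono hle
    have hMs : Mul2 ea s := near_mul2 hp (hMa.add hMb') hs
    have hMt : Mul2 ea (s - a) := hMs.sub hMa
    have hMv : Mul2 ea v := near_mul2 hp hMt hv
    have herr_a : |s - (a + b)| ≤ |a| := by
      have := hs.le hb
      rwa [show b - (a + b) = -a by ring, abs_neg] at this
    have hdb : |v - (s - a)| ≤ |s - (a + b)| := by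
      have := hv.le hb
      rwa [show b - (s - a) = -(s - (a + b)) by ring, abs_neg] at this
    have hda : |v - (s - a)| ≤ |a| := le_trans hdb herr_a
    have hpow : (2:ℝ) ^ ((p:ℤ) + (ea + 1)) = 2 ^ ((p:ℤ) + ea) * 2 := by
      rw [show (p:ℤ) + (ea + 1) = ((p:ℤ) + ea) + 1 by ring, zpsucc]
    have hzq := zp ea
    constructor
    · -- s - v ∈ Fp p
      rcases le_or_gt |s - v| (2 ^ ((p:ℤ) + ea)) with hc | hc
      · exact grid_mem' hp (hMs.sub hMv) hc
      · have h1 : |s - v| ≤ |a| + |v - (s - a)| := by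
          calc |s - v| = |a + ((s - a) - v)| := by congr 1; ring
          _ ≤ |a| + |(s - a) - v| := abs_add_le _ _
          _ = |a| + |v - (s - a)| := by rw [abs_sub_comm ((s - a)) v]
        have hd : 2 ^ ea < |v - (s - a)| := by linarith
        have htbig : 2 ^ ((p:ℤ) + (ea + 1)) < |s - a| := by
          by_contra hcon
          push_neg at hcon
          have hh := near_half hp hv hcon
          have h2 : (2:ℝ) ^ (ea + 1) = 2 ^ ea * 2 := zpsucc ea
          linarith
        have hv2 : Mul2 (ea + 2) v := by
          have hcle : (2:ℝ) ^ ((p:ℤ) + (ea + 2) - 1) ≤ |s - a| := by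
            rw [show (p:ℤ) + (ea + 2) - 1 = (p:ℤ) + (ea + 1) by ring]
            exact htbig.le
          exact mem_mul2 hp hv.mem (near_abs hv (two_zpow_mem p hp _) (zp _).le hcle)
        have hs1 : Mul2 (ea + 1) s := by
          apply mem_mul2 hp hs.mem
          have h3 : |s - a| ≤ |s| + |a| := by
            calc |s - a| = |s + (-a)| := by rw [sub_eq_add_neg]
            _ ≤ |s| + |(-a)| := abs_add_le _ _
            _ = |s| + |a| := by rw [abs_neg]
          rw [show (p:ℤ) + (ea + 1) - 1 = (p:ℤ) + ea by ring]
          linarith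
        apply grid_mem' hp (hs1.sub (hv2.mono (by omega)))
        linarith
    · -- b - v ∈ Fp p
      rcases le_or_gt |b - v| (2 ^ ((p:ℤ) + ea)) with hc | hc
      · exact grid_mem' hp (hMb'.sub hMv) hc
      · have h1 : |b - v| ≤ |s - (a + b)| + |v - (s - a)| := by
          calc |b - v| = |(-(s - (a + b))) + (-(v - (s - a)))| := by congr 1; ring
          _ ≤ |(-(s - (a + b)))| + |(-(v - (s - a)))| := abs_add_le _ _
          _ = |s - (a + b)| + |v - (s - a)| := by rw [abs_neg, abs_neg]
        have herr_big : 2 ^ ea < |s - (a + b)| := by linarith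
        have hd_big : 2 ^ ea < |v - (s - a)| := by linarith
        have hrbig : 2 ^ ((p:ℤ) + (ea + 1)) < |a + b| := by
          by_contra hcon
          push_neg at hcon
          have hh := near_half hp hs hcon
          have h2 : (2:ℝ) ^ (ea + 1) = 2 ^ ea * 2 := zpsucc ea
          linarith
        have htbig : 2 ^ ((p:ℤ) + (ea + 1)) < |s - a| := by
          by_contra hcon
          push_neg at hcon
          have hh := near_half hp hv hcon
          have h2 : (2:ℝ) ^ (ea + 1) = 2 ^ ea * 2 := zpsucc ea
          linarith
        have hv2 : Mul2 (ea + 2) v := by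
          have hcle : (2:ℝ) ^ ((p:ℤ) + (ea + 2) - 1) ≤ |s - a| := by
            rw [show (p:ℤ) + (ea + 2) - 1 = (p:ℤ) + (ea + 1) by ring]
            exact htbig.le
          exact mem_mul2 hp hv.mem (near_abs hv (two_zpow_mem p hp _) (zp _).le hcle)
        have hb1 : Mul2 (ea + 1) b := by
          apply mem_mul2 hp hb
          have h3 : |a + b| ≤ |a| + |b| := abs_add_le _ _
          rw [show (p:ℤ) + (ea + 1) - 1 = (p:ℤ) + ea by ring]
          linarith
        apply grid_mem' hp (hb1.sub (hv2.mono (by omega)))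
        linarith

end TwoSumAux

open TwoSumAux in
/-- Knuth's TwoSum is an error-free transformation without any assumption on
the magnitudes of `a` and `b`. -/
theorem twoSum_exact (p : ℕ) (hp : 0 < p) (fl : ℝ → ℝ)
    (hmem : ∀ x : ℝ, fl x ∈ Fp p)
    (hnear : ∀ x : ℝ, ∀ y ∈ Fp p, |fl x - x| ≤ |y - x|)
    (a b : ℝ) (ha : a ∈ Fp p) (hb : b ∈ Fp p)
    (s v e : ℝ) (hs : s = fl (a + b)) (hv : v = fl (s - a))
    (he : e = fl (fl (a - fl (s - v)) + fl (b - v))) :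
    s + e = a + b := by
  have hN : ∀ x : ℝ, Near p x (fl x) := fun x => ⟨hmem x, fun y hy => hnear x y hy⟩
  have hsN : Near p (a + b) s := hs ▸ hN (a + b)
  have hvN : Near p (s - a) v := hv ▸ hN (s - a)
  obtain ⟨hC3, hC4⟩ := claims hp ha hb hsN hvN
  -- the error of the first addition is representable
  have herr : (a + b) - s ∈ Fp p := err_mem hp ha hb hsN
  -- the error of the subtraction s - a is representable
  have hdmem : (s - a) - v ∈ Fp p := by
    have hvN' : Near p (s + -a) v := by rwa [← sub_eq_add_neg]
    have := err_mem hp hsN.mem (TwoSumAux.neg_mem ha) hvN'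
    rwa [← sub_eq_add_neg] at this
  -- w = fl (s - v) is exact
  have hw : fl (s - v) = s - v := Near.self hC3 (hN _)
  -- d1 = fl (a - w) is exact
  have hmem1 : a - (s - v) ∈ Fp p := by
    have := TwoSumAux.neg_mem hdmem
    rwa [show -((s - a) - v) = a - (s - v) by ring] at this
  have hd1 : fl (a - fl (s - v)) = a - (s - v) := by
    rw [hw]
    exact Near.self hmem1 (hN _)
  -- d2 = fl (b - v) is exact
  have hd2 : fl (b - v) = b - v := Near.self hC4 (hN _)
  have he' : e = (a + b) - s := by
    rw [he, hd1, hd2, show (a - (s - v)) + (b - v) = (a + b) - s by ring]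
    exact Near.self herr (hN _)
  rw [he']
  ring
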